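/- Fix v = (0, c, d) with c ≠ 0 (real numbers). For i = 1, 2 let v_i = (r_i, c_i, d_i) be a triple of real numbers with r_i ≠ 0, and let W_i = { (s, t) : t > 0 and (s² + t²)(−r_i c) + 2s·r_i d + 2(c d_i − c_i d) = 0 } be the corresponding potential wall of v in the upper half plane. Then either W₁ = W₂ or W₁ ∩ W₂ = ∅; that is, the rank-zero potential walls are concentric (hence nested) semicircles. -/

import Mathlib

/-- The potential wall in the upper half plane for `v = (0, c, d)` and a destabilizing
class `(rᵢ, cᵢ, dᵢ)` with `rᵢ ≠ 0`. -/
def rankZeroWall (c d rᵢ cᵢ dᵢ : ℝ) : Set (ℝ × ℝ) :=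
  {p | 0 < p.2 ∧
    (p.1 ^ 2 + p.2 ^ 2) * (-(rᵢ * c)) + 2 * p.1 * (rᵢ * d) + 2 * (c * dᵢ - cᵢ * d) = 0}

lemma rankZeroWall_mem_iff (c d rᵢ cᵢ dᵢ : ℝ) (hc : c ≠ 0) (hr : rᵢ ≠ 0) (p : ℝ × ℝ) :
    p ∈ rankZeroWall c d rᵢ cᵢ dᵢ ↔
      0 < p.2 ∧ p.1 ^ 2 + p.2 ^ 2 - 2 * p.1 * (d / c) = 2 * (c * dᵢ - cᵢ * d) / (rᵢ * c) := by
  unfold rankZeroWall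
  simp only [Set.mem_setOf_eq]
  constructor <;> rintro ⟨ht, h⟩ <;> refine ⟨ht, ?_⟩
  · field_simp
    linear_combination -h
  · field_simp at h
    have key : c * ((p.1 ^ 2 + p.2 ^ 2) * (-(rᵢ * c)) + 2 * p.1 * (rᵢ * d)
        + 2 * (c * dᵢ - cᵢ * d)) = c * 0 := by linear_combination (-c) * h
    exact mul_left_cancel₀ hc key

/-- Rank-zero potential walls are concentric semicircles: any two of them are either
equal or disjoint. -/
theorem rank_zero_walls_nested (c d : ℝ) (hc : c ≠ 0)
    (r₁ c₁ d₁ r₂ c₂ d₂ : ℝ) (h₁ : r₁ ≠ 0) (h₂ : r₂ ≠ 0) :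
    rankZeroWall c d r₁ c₁ d₁ = rankZeroWall c d r₂ c₂ d₂ ∨
      rankZeroWall c d r₁ c₁ d₁ ∩ rankZeroWall c d r₂ c₂ d₂ = ∅ := by
  by_cases hK : 2 * (c * d₁ - c₁ * d) / (r₁ * c) = 2 * (c * d₂ - c₂ * d) / (r₂ * c)
  · left
    ext p
    rw [rankZeroWall_mem_iff c d r₁ c₁ d₁ hc h₁, rankZeroWall_mem_iff c d r₂ c₂ d₂ hc h₂, hK]
  · right
    ext p
    simp only [Set.mem_inter_iff, Set.mem_empty_iff_false, iff_false]
    rintro ⟨hp1, hp2⟩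
    rw [rankZeroWall_mem_iff c d r₁ c₁ d₁ hc h₁] at hp1
    rw [rankZeroWall_mem_iff c d r₂ c₂ d₂ hc h₂] at hp2
    exact hK (hp1.2 ▸ hp2.2)
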